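/- Let R be a commutative ring, A, B, C commutative R-algebras with maps A → B surjective and an injective map C → B. Set P = A ×_B C. If D is a flat P-algebra, then the canonical map D → (D ⊗_P A) ×_{D ⊗_P B} (D ⊗_P C) is an isomorphism. -/

import Mathlib

open TensorProduct

/-- Let `P = A ×_B C` be a fiber product of commutative rings (over a base ring `R`),
where `φ : A → B` is surjective and `ψ = algebraMap C B` is injective and faithfully flat.
If `D` is a flat `P`-algebra, then the canonical map
`D → (D ⊗_P A) ×_{D ⊗_P B} (D ⊗_P C)` is an isomorphism, i.e. the pair of canonical maps
`d ↦ (d ⊗ 1, d ⊗ 1)` is injective with range exactly the fiber product. -/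
theorem flat_baseChange_of_fiberProduct
    (R P A B C D : Type)
    [CommRing R] [CommRing P] [CommRing A] [CommRing B] [CommRing C] [CommRing D]
    [Algebra R P] [Algebra P A] [Algebra P B] [Algebra P C] [Algebra P D]
    [Algebra C B] [IsScalarTower P C B]
    (φ : A →ₐ[P] B)
    (hφsurj : Function.Surjective φ)
    (hψinj : Function.Injective (algebraMap C B))
    (hψff : Module.FaithfullyFlat C B)
    -- `P` is the fiber product `A ×_B C`:
    (hcomp : ∀ p : P, φ (algebraMap P A p) = algebraMap C B (algebraMap P C p))
    (hfib : ∀ (a : A) (c : C), φ a = algebraMap C B c →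
      ∃! p : P, algebraMap P A p = a ∧ algebraMap P C p = c)
    [Module.Flat P D] :
    Function.Injective (fun d : D =>
      ((Algebra.TensorProduct.includeLeft (R := P) (S := P) d : D ⊗[P] A),
       (Algebra.TensorProduct.includeLeft (R := P) (S := P) d : D ⊗[P] C))) ∧
    Set.range (fun d : D =>
      ((Algebra.TensorProduct.includeLeft (R := P) (S := P) d : D ⊗[P] A),
       (Algebra.TensorProduct.includeLeft (R := P) (S := P) d : D ⊗[P] C))) =
      {x : (D ⊗[P] A) × (D ⊗[P] C) |
        Algebra.TensorProduct.map (AlgHom.id P D) φ x.1 =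
        Algebra.TensorProduct.map (AlgHom.id P D) (IsScalarTower.toAlgHom P C B) x.2} := by
  classical
  set ψ : C →ₐ[P] B := IsScalarTower.toAlgHom P C B with hψ
  have hψeq : ∀ c : C, ψ c = algebraMap C B c := fun c => rfl
  set ι : P →ₗ[P] A × C := (Algebra.linearMap P A).prod (Algebra.linearMap P C) with hι
  set f : A × C →ₗ[P] B :=
    φ.toLinearMap ∘ₗ LinearMap.fst P A C - ψ.toLinearMap ∘ₗ LinearMap.snd P A C with hf
  have hιinj : Function.Injective ι := by
    intro p q hpq
    have h1 : algebraMap P A p = algebraMap P A q := congrArg Prod.fst hpq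
    have h2 : algebraMap P C p = algebraMap P C q := congrArg Prod.snd hpq
    obtain ⟨r, -, hr⟩ := hfib (algebraMap P A p) (algebraMap P C p) (hcomp p)
    exact (hr p ⟨rfl, rfl⟩).trans (hr q ⟨h1.symm, h2.symm⟩).symm
  have hexact : Function.Exact ι f := by
    intro y
    constructor
    · intro hy
      have : φ y.1 = algebraMap C B y.2 := by
        have := sub_eq_zero.mp hy
        have h' : φ y.1 = ψ y.2 := by simpa [hf] using this
        exact h'
      obtain ⟨p, ⟨hp1, hp2⟩, -⟩ := hfib y.1 y.2 this
      exact ⟨p, by simp [hι, Prod.ext_iff, hp1, hp2]⟩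
    · rintro ⟨p, rfl⟩
      simp [hf, hι, sub_eq_zero, hψeq, hcomp p]
  have hinj' : Function.Injective (ι.lTensor D) :=
    Module.Flat.lTensor_preserves_injective_linearMap ι hιinj
  have hexact' : Function.Exact (ι.lTensor D) (f.lTensor D) :=
    Module.Flat.lTensor_exact D hexact
  set e : D ⊗[P] (A × C) ≃ₗ[P] (D ⊗[P] A) × (D ⊗[P] C) := TensorProduct.prodRight P P D A C
  set r : D ≃ₗ[P] D ⊗[P] P := (TensorProduct.rid P D).symm with hr
  set F : D → (D ⊗[P] A) × (D ⊗[P] C) := fun d : D =>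
      ((Algebra.TensorProduct.includeLeft (R := P) (S := P) d : D ⊗[P] A),
       (Algebra.TensorProduct.includeLeft (R := P) (S := P) d : D ⊗[P] C)) with hF
  have hFeq : F = e ∘ (ι.lTensor D) ∘ r := by
    funext d
    show _ = e (ι.lTensor D (r d))
    have : r d = d ⊗ₜ[P] 1 := by simp [hr, TensorProduct.rid_symm_apply]
    rw [this]
    have h2 : (ι.lTensor D) (d ⊗ₜ[P] (1 : P)) = d ⊗ₜ[P] (((1 : A), (1 : C)) : A × C) := by
      rw [LinearMap.lTensor_tmul]
      congr 1
      simp [hι, Prod.ext_iff]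
    rw [h2]
    show _ = (TensorProduct.prodRight P P D A C) (d ⊗ₜ[P] (((1 : A), (1 : C)) : A × C))
    rw [TensorProduct.prodRight_tmul]
    rfl
  set g : (D ⊗[P] A) × (D ⊗[P] C) →ₗ[P] D ⊗[P] B :=
    (Algebra.TensorProduct.map (AlgHom.id P D) φ).toLinearMap ∘ₗ LinearMap.fst P _ _
    - (Algebra.TensorProduct.map (AlgHom.id P D) ψ).toLinearMap ∘ₗ LinearMap.snd P _ _ with hg
  have hge : f.lTensor D = g ∘ₗ (e : D ⊗[P] (A × C) →ₗ[P] _) := by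
    apply TensorProduct.ext'
    intro d y
    obtain ⟨a, c⟩ := y
    simp only [hg, hf, LinearMap.lTensor_tmul, LinearMap.sub_apply, LinearMap.coe_comp,
      Function.comp_apply, LinearMap.fst_apply, LinearMap.snd_apply, AlgHom.toLinearMap_apply,
      LinearMap.coe_coe, LinearEquiv.coe_coe, TensorProduct.tmul_sub, e, TensorProduct.prodRight_tmul,
      Algebra.TensorProduct.map_tmul, AlgHom.coe_id, id_eq]
  constructor
  · rw [hFeq]
    exact e.injective.comp (hinj'.comp r.injective)
  · rw [hFeq]
    ext x
    constructor
    · rintro ⟨d, rfl⟩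
      have : f.lTensor D (ι.lTensor D (r d)) = 0 := hexact'.apply_apply_eq_zero (r d)
      rw [hge] at this
      simpa [sub_eq_zero, hg, -Algebra.TensorProduct.toLinearMap_map] using this
    · intro hx
      have hx0 : g (e (e.symm x)) = 0 := by
        rw [e.apply_symm_apply]
        simpa [hg, sub_eq_zero, -Algebra.TensorProduct.toLinearMap_map] using hx
      have : f.lTensor D (e.symm x) = 0 := by rw [hge]; exact hx0
      obtain ⟨z, hz⟩ := (hexact' (e.symm x)).mp this
      refine ⟨(TensorProduct.rid P D) z, ?_⟩
      show e (ι.lTensor D (r ((TensorProduct.rid P D) z))) = x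
      rw [show r ((TensorProduct.rid P D) z) = z from (TensorProduct.rid P D).symm_apply_apply z,
        hz, e.apply_symm_apply]
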